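/- (Instability with even-order resonance) If Z' = Z + R^{2-2/n}(1 + β̃e^{iΦ} + η R^{1/n}) with Z = Re^{iΦ}, |β̃| < 1, and η bounded near 0, then the fixed point at the origin is unstable. -/

import Mathlib

/-- Instability with even-order resonance: if, for `Z = R e^{iΦ} ≠ 0`,
`Z' = Z + R^{2-2/n}(1 + β̃ e^{iΦ} + η(Z) R^{1/n})` (here `e^{iΦ} = Z/|Z|`), with `n ≥ 4`
even, `|β̃| < 1`, and `η` bounded near `0`, then the fixed point at the origin is
unstable. -/
theorem stmt14 (n : ℕ) (hn : 4 ≤ n) (heven : Even n) (T η : ℂ → ℂ) (β : ℂ)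
    (hβ : ‖β‖ < 1) (M r₁ : ℝ) (hr₁ : 0 < r₁)
    (hbound : ∀ Z : ℂ, ‖Z‖ < r₁ → ‖η Z‖ ≤ M)
    (hT0 : T 0 = 0)
    (hT : ∀ Z : ℂ, Z ≠ 0 → T Z = Z + (↑(‖Z‖ ^ ((2:ℝ) - 2/(n:ℝ))) : ℂ) *
      (1 + β * (Z / (↑(‖Z‖) : ℂ)) + η Z * (↑(‖Z‖ ^ ((1:ℝ)/(n:ℝ))) : ℂ))) :
    ∃ δ > 0, ∀ ρ > 0, ∃ Z₀ : ℂ, ‖Z₀‖ < ρ ∧ ∃ k : ℕ, δ ≤ ‖T^[k] Z₀‖ := by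
  have hβ0 : (0:ℝ) ≤ ‖β‖ := norm_nonneg _
  set c : ℝ := (1 - ‖β‖) / 2 with hc
  have hcpos : 0 < c := by simp only [hc]; linarith
  have hM0 : 0 ≤ M := le_trans (norm_nonneg _) (hbound 0 (by simpa using hr₁))
  have hn0 : (0:ℝ) < (n:ℝ) := by positivity
  set a : ℝ := 2 - 2 / (n:ℝ) with ha
  have hapos : 0 < a := by
    have : 2 / (n:ℝ) ≤ 2 / 4 := by
      apply div_le_div_of_nonneg_left (by norm_num) (by norm_num)
      exact_mod_cast hn
    simp only [ha]; linarith
  set δ : ℝ := min (r₁ / 2) ((c / (M + 1)) ^ n) with hδ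
  have hδpos : 0 < δ := by
    apply lt_min (by linarith)
    positivity
  have hRb : ∀ R : ℝ, 0 ≤ R → R < δ → M * R ^ ((1:ℝ)/(n:ℝ)) ≤ c := by
    intro R hR0 hRδ
    have h1 : R ^ ((1:ℝ)/(n:ℝ)) ≤ ((c / (M + 1)) ^ n) ^ ((1:ℝ)/(n:ℝ)) :=
      Real.rpow_le_rpow hR0 (le_trans hRδ.le (min_le_right _ _)) (by positivity)
    have cM : (0:ℝ) ≤ c / (M + 1) := by positivity
    have h2 : ((c / (M + 1)) ^ n) ^ ((1:ℝ)/(n:ℝ)) = c / (M + 1) := by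
      rw [← Real.rpow_natCast (c / (M+1)) n, ← Real.rpow_mul cM,
        mul_one_div, div_self (ne_of_gt hn0), Real.rpow_one]
    rw [h2] at h1
    have h4 : M * R ^ ((1:ℝ)/(n:ℝ)) ≤ M * (c / (M + 1)) :=
      mul_le_mul_of_nonneg_left h1 hM0
    have h3 : M * (c / (M + 1)) ≤ c := by
      rw [mul_div_assoc', div_le_iff₀ (by linarith)]
      nlinarith
    linarith
  -- step lemma
  have step : ∀ Z : ℂ, 0 < Z.re → ‖Z‖ < δ → Z.re + c * Z.re ^ a ≤ (T Z).re := by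
    intro Z hZre hZδ
    have hZ0 : Z ≠ 0 := fun h => by simp [h] at hZre
    have hR0 : 0 < ‖Z‖ := norm_pos_iff.mpr hZ0
    have hRr₁ : ‖Z‖ < r₁ := lt_of_lt_of_le hZδ (le_trans (min_le_left _ _) (by linarith))
    rw [hT Z hZ0]
    have hre : (Z + (↑(‖Z‖ ^ a) : ℂ) *
        (1 + β * (Z / (↑(‖Z‖) : ℂ)) + η Z * (↑(‖Z‖ ^ ((1:ℝ)/(n:ℝ))) : ℂ))).re
        = Z.re + ‖Z‖ ^ a * (1 + (β * (Z / (↑(‖Z‖) : ℂ))).re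
          + (η Z).re * ‖Z‖ ^ ((1:ℝ)/(n:ℝ))) := by
      simp [Complex.add_re, Complex.re_ofReal_mul, Complex.mul_re,
        Complex.ofReal_re, Complex.ofReal_im]
    rw [hre]
    have hu : ‖Z / (↑(‖Z‖) : ℂ)‖ = 1 := by
      rw [norm_div, Complex.norm_real, Real.norm_of_nonneg hR0.le, div_self hR0.ne']
    have hb1 : -‖β‖ ≤ (β * (Z / (↑(‖Z‖) : ℂ))).re := by
      have h := Complex.abs_re_le_norm (β * (Z / (↑(‖Z‖) : ℂ)))
      have hnm : ‖β * (Z / (↑(‖Z‖) : ℂ))‖ = ‖β‖ := by rw [norm_mul, hu, mul_one]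
      rw [hnm] at h
      exact (abs_le.mp h).1
    have hb2 : -M ≤ (η Z).re := by
      have h := Complex.abs_re_le_norm (η Z)
      have := hbound Z hRr₁
      have := (abs_le.mp h).1
      linarith
    have hRbZ : M * ‖Z‖ ^ ((1:ℝ)/(n:ℝ)) ≤ c := hRb _ hR0.le hZδ
    have hbpos : (0:ℝ) ≤ ‖Z‖ ^ ((1:ℝ)/(n:ℝ)) := Real.rpow_nonneg hR0.le _
    have hinner : c ≤ 1 + (β * (Z / (↑(‖Z‖) : ℂ))).re
        + (η Z).re * ‖Z‖ ^ ((1:ℝ)/(n:ℝ)) := by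
      have : -M * ‖Z‖ ^ ((1:ℝ)/(n:ℝ)) ≤ (η Z).re * ‖Z‖ ^ ((1:ℝ)/(n:ℝ)) :=
        mul_le_mul_of_nonneg_right hb2 hbpos
      simp only [hc]
      nlinarith
    have hRa' : Z.re ^ a ≤ ‖Z‖ ^ a := by
      apply Real.rpow_le_rpow hZre.le _ hapos.le
      exact Complex.re_le_norm Z
    have hRapos : (0:ℝ) ≤ ‖Z‖ ^ a := Real.rpow_nonneg hR0.le _
    nlinarith [mul_le_mul_of_nonneg_left hinner hRapos,
      mul_le_mul_of_nonneg_left hRa' hcpos.le]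
  refine ⟨δ, hδpos, ?_⟩
  intro ρ hρ
  set x : ℝ := min (ρ / 2) (δ / 2) with hx
  have hxpos : 0 < x := lt_min (by linarith) (by linarith)
  refine ⟨(x : ℂ), ?_, ?_⟩
  · rw [Complex.norm_real, Real.norm_of_nonneg hxpos.le]
    exact lt_of_le_of_lt (min_le_left _ _) (by linarith)
  by_contra h
  push_neg at h
  have hxa : (0:ℝ) < c * x ^ a := by positivity
  have key : ∀ k : ℕ, x + k * (c * x ^ a) ≤ (T^[k] (x:ℂ)).re := by
    intro k
    induction k with
    | zero => simp
    | succ k ih =>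
      have hlt := h k
      have hrepos : 0 < (T^[k] (x:ℂ)).re := by
        have : (0:ℝ) ≤ k * (c * x ^ a) := by positivity
        linarith
      have hstep := step _ hrepos hlt
      have hxle : x ≤ (T^[k] (x:ℂ)).re := by
        have : (0:ℝ) ≤ k * (c * x ^ a) := by positivity
        linarith
      have hmono : x ^ a ≤ (T^[k] (x:ℂ)).re ^ a :=
        Real.rpow_le_rpow hxpos.le hxle hapos.le
      rw [Function.iterate_succ_apply']
      push_cast
      nlinarith [mul_le_mul_of_nonneg_left hmono hcpos.le]
  obtain ⟨k, hk⟩ := exists_nat_gt (δ / (c * x ^ a))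
  have h1 : δ < k * (c * x ^ a) := by
    rwa [div_lt_iff₀ hxa] at hk
  have h2 := key k
  have h3 : (T^[k] (x:ℂ)).re ≤ ‖T^[k] (x:ℂ)‖ := by
    exact Complex.re_le_norm _
  have h4 := h k
  linarith
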